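/- Let n > 1 and L_1, ..., L_n > 0 with ∑_{i=1}^n e^{-L_i} = 1, and let Q̃(x) = ∑_{L_1 k_1 + ... + L_n k_n ≤ x} M(k_1,...,k_n) for x ≥ 0 (sum over tuples of nonnegative integers, M the multinomial coefficient). Then there exist constants c_1, c_2 such that c_1 < ln Q̃(x) - x < c_2 for all x ≥ 0. -/

import Mathlib

open Finset

noncomputable def Qt {n : ℕ} (L : Fin n → ℝ) (x : ℝ) : ℝ :=
  ∑' k : Fin n → ℕ, if ∑ i, L i * k i ≤ x then (Nat.multinomial Finset.univ k : ℝ) else 0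

section Aux
variable {n : ℕ} (L : Fin n → ℝ)

/-- finite box of candidate tuples -/
noncomputable def Gx (x : ℝ) : Finset (Fin n → ℕ) :=
  (Fintype.piFinset fun i => Finset.range (⌈x / L i⌉₊ + 1)).filter
    fun k => ∑ i, (L i) * (k i : ℝ) ≤ x

lemma mem_Gx (hL : ∀ i, 0 < L i) {x : ℝ} {k : Fin n → ℕ} :
    k ∈ Gx L x ↔ ∑ i, L i * (k i : ℝ) ≤ x := by
  constructor
  · exact fun h => (Finset.mem_filter.1 h).2
  · intro h
    refine Finset.mem_filter.2 ⟨Fintype.mem_piFinset.2 fun i => ?_, h⟩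
    have h1 : L i * (k i : ℝ) ≤ x := by
      refine le_trans ?_ h
      exact Finset.single_le_sum (f := fun j => L j * (k j : ℝ))
        (fun j _ => mul_nonneg (hL j).le (Nat.cast_nonneg _)) (Finset.mem_univ i)
    have h2 : (k i : ℝ) ≤ x / L i := (le_div_iff₀' (hL i)).2 h1
    have h3 : (k i : ℝ) ≤ (⌈x / L i⌉₊ : ℝ) := h2.trans (Nat.le_ceil _)
    exact Finset.mem_range.2 (Nat.lt_succ_of_le (by exact_mod_cast h3))

lemma Qt_eq (hL : ∀ i, 0 < L i) (x : ℝ) :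
    Qt L x = ∑ k ∈ Gx L x, (Nat.multinomial Finset.univ k : ℝ) := by
  unfold Qt
  rw [tsum_eq_sum (s := Gx L x) (f := fun k : Fin n → ℕ =>
    if ∑ i, L i * (k i : ℝ) ≤ x then (Nat.multinomial Finset.univ k : ℝ) else 0)]
  · exact Finset.sum_congr rfl fun k hk => if_pos ((mem_Gx L hL).1 hk)
  · intro k hk
    exact if_neg fun h => hk ((mem_Gx L hL).2 h)

lemma Qt_mono (hL : ∀ i, 0 < L i) {x y : ℝ} (hxy : x ≤ y) : Qt L x ≤ Qt L y := by
  rw [Qt_eq L hL, Qt_eq L hL]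
  refine Finset.sum_le_sum_of_subset_of_nonneg ?_ (fun k _ _ => Nat.cast_nonneg _)
  intro k hk
  exact (mem_Gx L hL).2 (((mem_Gx L hL).1 hk).trans hxy)

lemma Qt_one_le (hL : ∀ i, 0 < L i) {x : ℝ} (hx : 0 ≤ x) : 1 ≤ Qt L x := by
  rw [Qt_eq L hL]
  have h0 : (0 : Fin n → ℕ) ∈ Gx L x := (mem_Gx L hL).2 (by simp [hx])
  calc (1 : ℝ) = (Nat.multinomial Finset.univ (0 : Fin n → ℕ) : ℝ) := by
        simp [Nat.multinomial]
    _ ≤ _ := Finset.single_le_sum (f := fun k : Fin n → ℕ => (Nat.multinomial Finset.univ k : ℝ))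
        (fun k _ => Nat.cast_nonneg _) h0

end Aux

section Pascal
variable {n : ℕ}

/-- one-step multinomial identity -/
lemma stepA (k : Fin n → ℕ) (i : Fin n) (hki : k i ≠ 0) :
    (∑ j, k j) * Nat.multinomial Finset.univ (Function.update k i (k i - 1)) =
      k i * Nat.multinomial Finset.univ k := by
  set k' := Function.update k i (k i - 1) with hk'
  have hk'i : k' i = k i - 1 := Function.update_self _ _ _
  have hk'ne : ∀ j, j ≠ i → k' j = k j := fun j hj => Function.update_of_ne hj _ _
  have hkipos : 0 < k i := Nat.pos_of_ne_zero hki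
  have hPp : k i * ∏ j, (k' j).factorial = ∏ j, (k j).factorial := by
    rw [← Finset.mul_prod_erase _ (fun j => (k' j).factorial) (Finset.mem_univ i),
        ← Finset.mul_prod_erase _ (fun j => (k j).factorial) (Finset.mem_univ i),
        ← mul_assoc, hk'i, Nat.mul_factorial_pred hkipos.ne']
    congr 1
    exact Finset.prod_congr rfl fun j hj => by
      rw [hk'ne j (Finset.ne_of_mem_erase hj)]
  have hs : ∑ j, k' j = (∑ j, k j) - 1 := by
    rw [← Finset.add_sum_erase _ k' (Finset.mem_univ i),
        ← Finset.add_sum_erase _ k (Finset.mem_univ i), hk'i]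
    have : ∑ j ∈ Finset.univ.erase i, k' j = ∑ j ∈ Finset.univ.erase i, k j :=
      Finset.sum_congr rfl fun j hj => hk'ne j (Finset.ne_of_mem_erase hj)
    omega
  have hspos : 0 < ∑ j, k j :=
    lt_of_lt_of_le hkipos (Finset.single_le_sum (fun j _ => Nat.zero_le _) (Finset.mem_univ i))
  have spec' : (∏ j, (k' j).factorial) * Nat.multinomial Finset.univ k' =
      (∑ j, k' j).factorial := Nat.multinomial_spec _ _
  have spec : (∏ j, (k j).factorial) * Nat.multinomial Finset.univ k =
      (∑ j, k j).factorial := Nat.multinomial_spec _ _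
  have hP : 0 < ∏ j, (k j).factorial :=
    Finset.prod_pos fun _ _ => Nat.factorial_pos _
  refine Nat.eq_of_mul_eq_mul_left hP ?_
  calc (∏ j, (k j).factorial) * ((∑ j, k j) * Nat.multinomial Finset.univ k')
      = (∑ j, k j) * ((k i * ∏ j, (k' j).factorial) * Nat.multinomial Finset.univ k') := by
        rw [hPp]; ring
    _ = (∑ j, k j) * (k i * ((∏ j, (k' j).factorial) * Nat.multinomial Finset.univ k')) := by
        ring
    _ = k i * ((∑ j, k j) * (∑ j, k' j).factorial) := by rw [spec']; ring
    _ = k i * (∑ j, k j).factorial := by rw [hs, Nat.mul_factorial_pred hspos.ne']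
    _ = k i * ((∏ j, (k j).factorial) * Nat.multinomial Finset.univ k) := by rw [spec]
    _ = (∏ j, (k j).factorial) * (k i * Nat.multinomial Finset.univ k) := by ring

lemma pascal (k : Fin n → ℕ) (hk : k ≠ 0) :
    Nat.multinomial Finset.univ k =
      ∑ i ∈ Finset.univ.filter (fun i => k i ≠ 0),
        Nat.multinomial Finset.univ (Function.update k i (k i - 1)) := by
  have hex : ∃ i, k i ≠ 0 := by
    by_contra h
    push_neg at h
    exact hk (funext fun i => h i)
  obtain ⟨i0, hi0⟩ := hex
  have hspos : 0 < ∑ j, k j :=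
    lt_of_lt_of_le (Nat.pos_of_ne_zero hi0)
      (Finset.single_le_sum (fun j _ => Nat.zero_le _) (Finset.mem_univ i0))
  refine Nat.eq_of_mul_eq_mul_left hspos ?_
  rw [Finset.mul_sum]
  calc (∑ j, k j) * Nat.multinomial Finset.univ k
      = (∑ i ∈ Finset.univ.filter (fun i => k i ≠ 0), k i) * Nat.multinomial Finset.univ k := by
        rw [Finset.sum_filter_ne_zero]
    _ = ∑ i ∈ Finset.univ.filter (fun i => k i ≠ 0), k i * Nat.multinomial Finset.univ k := by
        rw [Finset.sum_mul]
    _ = _ := by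
        refine Finset.sum_congr rfl fun i hi => ?_
        exact (stepA k i (Finset.mem_filter.1 hi).2).symm

end Pascal

section Rec
variable {n : ℕ} (L : Fin n → ℝ)

lemma W_update (k : Fin n → ℕ) (i : Fin n) (m : ℕ) :
    ∑ j, L j * ((Function.update k i m j : ℕ) : ℝ) =
      L i * m + ∑ j ∈ Finset.univ.erase i, L j * (k j : ℝ) := by
  rw [← Finset.add_sum_erase _ (fun j => L j * ((Function.update k i m j : ℕ) : ℝ))
    (Finset.mem_univ i), Function.update_self]
  congr 1
  exact Finset.sum_congr rfl fun j hj => by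
    rw [Function.update_of_ne (Finset.ne_of_mem_erase hj)]

lemma W_split (k : Fin n → ℕ) (i : Fin n) :
    ∑ j, L j * (k j : ℝ) = L i * (k i : ℝ) + ∑ j ∈ Finset.univ.erase i, L j * (k j : ℝ) :=
  (Finset.add_sum_erase _ (fun j => L j * (k j : ℝ)) (Finset.mem_univ i)).symm

lemma Qt_rec (hL : ∀ i, 0 < L i) {x : ℝ} (hx : 0 ≤ x) :
    Qt L x = 1 + ∑ i, Qt L (x - L i) := by
  have hQt : ∀ y : ℝ, Qt L y = ∑ k ∈ Gx L y, (Nat.multinomial Finset.univ k : ℝ) :=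
    Qt_eq L hL
  have h0mem : (0 : Fin n → ℕ) ∈ Gx L x := (mem_Gx L hL).2 (by simp [hx])
  rw [hQt, ← Finset.add_sum_erase _ _ h0mem]
  have hc0 : (Nat.multinomial Finset.univ (0 : Fin n → ℕ) : ℝ) = 1 := by
    simp [Nat.multinomial]
  rw [hc0]
  congr 1
  calc ∑ k ∈ (Gx L x).erase 0, (Nat.multinomial Finset.univ k : ℝ)
      = ∑ k ∈ (Gx L x).erase 0, ∑ i ∈ Finset.univ.filter (fun i => k i ≠ 0),
          (Nat.multinomial Finset.univ (Function.update k i (k i - 1)) : ℝ) := by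
        refine Finset.sum_congr rfl fun k hk => ?_
        have hkne : k ≠ 0 := (Finset.mem_erase.1 hk).1
        exact_mod_cast congrArg (Nat.cast (R := ℝ)) (pascal k hkne)
    _ = ∑ k ∈ (Gx L x).erase 0, ∑ i, (if k i ≠ 0 then
          (Nat.multinomial Finset.univ (Function.update k i (k i - 1)) : ℝ) else 0) := by
        refine Finset.sum_congr rfl fun k _ => Finset.sum_filter _ _
    _ = ∑ i, ∑ k ∈ (Gx L x).erase 0, (if k i ≠ 0 then
          (Nat.multinomial Finset.univ (Function.update k i (k i - 1)) : ℝ) else 0) :=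
        Finset.sum_comm
    _ = ∑ i, ∑ k ∈ ((Gx L x).erase 0).filter (fun k => k i ≠ 0),
          (Nat.multinomial Finset.univ (Function.update k i (k i - 1)) : ℝ) := by
        refine Finset.sum_congr rfl fun i _ => (Finset.sum_filter _ _).symm
    _ = ∑ i, ∑ k' ∈ Gx L (x - L i), (Nat.multinomial Finset.univ k' : ℝ) := by
        refine Finset.sum_congr rfl fun i _ => ?_
        refine Finset.sum_bij' (fun k _ => Function.update k i (k i - 1))
          (fun k' _ => Function.update k' i (k' i + 1)) ?_ ?_ ?_ ?_ ?_
        · -- maps forward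
          intro k hk
          obtain ⟨hk1, hk2⟩ := Finset.mem_filter.1 hk
          have hki : k i ≠ 0 := hk2
          have hW : ∑ j, L j * (k j : ℝ) ≤ x := (mem_Gx L hL).1 (Finset.mem_of_mem_erase hk1)
          refine (mem_Gx L hL).2 ?_
          rw [W_update]
          have hcast : ((k i - 1 : ℕ) : ℝ) = (k i : ℝ) - 1 := by
            have := Nat.one_le_iff_ne_zero.2 hki
            push_cast [this]; ring
          rw [hcast]
          have hsplit := W_split L k i
          linarith
        · -- maps backward
          intro k' hk'
          have hW : ∑ j, L j * (k' j : ℝ) ≤ x - L i := (mem_Gx L hL).1 hk'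
          have hWk : ∑ j, L j * ((Function.update k' i (k' i + 1) j : ℕ) : ℝ) ≤ x := by
            rw [W_update]
            have hsplit := W_split L k' i
            push_cast
            linarith
          refine Finset.mem_filter.2 ⟨Finset.mem_erase.2 ⟨?_, (mem_Gx L hL).2 hWk⟩, ?_⟩
          · intro h
            have := congrFun h i
            simp [Function.update_self] at this
          · simp [Function.update_self]
        · -- left inverse
          intro k hk
          have hki : k i ≠ 0 := (Finset.mem_filter.1 hk).2
          simp only [Function.update_idem, Function.update_self]
          rw [Nat.sub_add_cancel (Nat.one_le_iff_ne_zero.2 hki), Function.update_eq_self]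
        · -- right inverse
          intro k' hk'
          simp only [Function.update_idem, Function.update_self]
          rw [Nat.add_sub_cancel, Function.update_eq_self]
        · intro k hk
          rfl
    _ = ∑ i, Qt L (x - L i) := Finset.sum_congr rfl fun i _ => (hQt _).symm

end Rec

theorem stmt7 (n : ℕ) (hn : 1 < n) (L : Fin n → ℝ) (hL : ∀ i, 0 < L i)
    (hnorm : ∑ i, Real.exp (-L i) = 1) :
    ∃ c₁ c₂ : ℝ, ∀ x : ℝ, 0 ≤ x →
      c₁ < Real.log (Qt L x) - x ∧ Real.log (Qt L x) - x < c₂ := by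
  have hn0 : 0 < n := lt_trans one_pos hn
  have : Nonempty (Fin n) := ⟨⟨0, hn0⟩⟩
  have H : (Finset.univ : Finset (Fin n)).Nonempty := Finset.univ_nonempty
  set M : ℝ := Finset.univ.sup' H L with hM
  set δ : ℝ := Finset.univ.inf' H L with hδ
  have hδpos : 0 < δ := (Finset.lt_inf'_iff H).2 fun i _ => hL i
  have hLM : ∀ i, L i ≤ M := fun i => Finset.le_sup' L (Finset.mem_univ i)
  have hδL : ∀ i, δ ≤ L i := fun i => Finset.inf'_le L (Finset.mem_univ i)
  have i0 : Fin n := ⟨0, hn0⟩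
  have hM0 : 0 < M := lt_of_lt_of_le (hL i0) (hLM i0)
  set B : ℝ := Qt L M + 2 with hB
  have hQM1 : 1 ≤ Qt L M := Qt_one_le L hL hM0.le
  have hB3 : 3 ≤ B := by linarith
  have hn2 : (2 : ℝ) ≤ (n : ℝ) := by exact_mod_cast hn
  -- base case: x ∈ [0, M]
  have hbase : ∀ x : ℝ, 0 ≤ x → x ≤ M →
      Real.exp (x - M) ≤ Qt L x ∧ Qt L x ≤ B * Real.exp x - 1 := by
    intro x hx hxM
    constructor
    · calc Real.exp (x - M) ≤ Real.exp 0 := Real.exp_le_exp.2 (by linarith)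
        _ = 1 := Real.exp_zero
        _ ≤ Qt L x := Qt_one_le L hL hx
    · have h1 : Qt L x ≤ Qt L M := Qt_mono L hL hxM
      have h2 : B ≤ B * Real.exp x := by
        nlinarith [Real.one_le_exp hx]
      linarith
  -- induction on m
  have key : ∀ m : ℕ, ∀ x : ℝ, 0 ≤ x → x ≤ M + m * δ →
      Real.exp (x - M) ≤ Qt L x ∧ Qt L x ≤ B * Real.exp x - 1 := by
    intro m
    induction m with
    | zero => intro x hx hxm; exact hbase x hx (by simpa using hxm)
    | succ m ih =>
      intro x hx hxm
      rcases le_or_gt x M with hxM | hxM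
      · exact hbase x hx hxM
      · have hrec := Qt_rec L hL hx
        have hsub : ∀ i, 0 ≤ x - L i ∧ x - L i ≤ M + m * δ := by
          intro i
          constructor
          · have := hLM i; linarith
          · have h1 := hδL i
            have : (((m : ℕ) + 1 : ℕ) : ℝ) * δ = m * δ + δ := by push_cast; ring
            rw [this] at hxm
            linarith
        have hlow : ∀ i, Real.exp (x - L i - M) ≤ Qt L (x - L i) :=
          fun i => (ih _ (hsub i).1 (hsub i).2).1
        have hup : ∀ i, Qt L (x - L i) ≤ B * Real.exp (x - L i) - 1 :=
          fun i => (ih _ (hsub i).1 (hsub i).2).2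
        have hexp : ∀ i, Real.exp (x - L i) = Real.exp x * Real.exp (-L i) := by
          intro i; rw [← Real.exp_add]; ring_nf
        constructor
        · have h1 : Real.exp (x - M) = ∑ i, Real.exp (x - M - L i) := by
            have : ∀ i, Real.exp (x - M - L i) = Real.exp (x - M) * Real.exp (-L i) := by
              intro i; rw [← Real.exp_add]; ring_nf
            rw [Finset.sum_congr rfl fun i _ => this i, ← Finset.mul_sum, hnorm, mul_one]
          have h2 : ∑ i, Real.exp (x - M - L i) ≤ ∑ i, Qt L (x - L i) := by
            refine Finset.sum_le_sum fun i _ => ?_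
            have := hlow i
            have heq : x - M - L i = x - L i - M := by ring
            rwa [heq]
          rw [hrec]
          linarith
        · have h2 : ∑ i, Qt L (x - L i) ≤ B * Real.exp x - n := by
            calc ∑ i, Qt L (x - L i) ≤ ∑ i, (B * Real.exp (x - L i) - 1) :=
                  Finset.sum_le_sum fun i _ => hup i
              _ = B * Real.exp x * (∑ i, Real.exp (-L i)) - n := by
                  rw [Finset.sum_sub_distrib]
                  congr 1
                  · rw [Finset.mul_sum]
                    refine Finset.sum_congr rfl fun i _ => ?_
                    rw [hexp i]; ring
                  · simp [Finset.card_univ]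
              _ = B * Real.exp x - n := by rw [hnorm, mul_one]
          rw [hrec]
          linarith
  have main : ∀ x : ℝ, 0 ≤ x →
      Real.exp (x - M) ≤ Qt L x ∧ Qt L x ≤ B * Real.exp x - 1 := by
    intro x hx
    refine key ⌈x / δ⌉₊ x hx ?_
    have h1 : x / δ ≤ (⌈x / δ⌉₊ : ℝ) := Nat.le_ceil _
    have h2 : x ≤ (⌈x / δ⌉₊ : ℝ) * δ := by
      rw [div_le_iff₀ hδpos] at h1; linarith
    linarith
  refine ⟨-M - 1, Real.log B + 1, fun x hx => ?_⟩
  obtain ⟨hlo, hhi⟩ := main x hx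
  have hQpos : 0 < Qt L x := lt_of_lt_of_le (Real.exp_pos _) hlo
  constructor
  · have h1 : x - M ≤ Real.log (Qt L x) := by
      calc x - M = Real.log (Real.exp (x - M)) := (Real.log_exp _).symm
        _ ≤ Real.log (Qt L x) := Real.log_le_log (Real.exp_pos _) hlo
    linarith
  · have hQB : Qt L x < B * Real.exp x := by linarith
    have h1 : Real.log (Qt L x) < Real.log (B * Real.exp x) :=
      Real.log_lt_log hQpos hQB
    have h2 : Real.log (B * Real.exp x) = Real.log B + x := by
      rw [Real.log_mul (by linarith) (Real.exp_ne_zero _), Real.log_exp]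
    linarith
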